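/- Let n ≥ 2 and d : Fin n → ℕ with d j ≥ 2 for every j; set S = ∑ j, (d j − 1) and D = ∏ j, d j. Then there exist subspaces G₁ and G₂ of EuclideanSpace ℂ ((j : Fin n) → Fin (d j)), mutually orthogonal and each orthogonal to the coordinate basis vectors e_{(0,…,0)} and e_{(d_1−1,…,d_n−1)}, such that finrank G₁ = finrank G₂ = S − 1, every nonzero vector of G₁ and every nonzero vector of G₂ is genuinely multipartite entangled, and the orthogonal complement of span{e_{(0,…,0)}, e_{(d_1−1,…,d_n−1)}} ⊔ G₁ ⊔ G₂ has finrank D − 2S and contains no nonzero fully product vector. -/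

import Mathlib

/-- A vector of the multipartite space is *fully product* if it is a simple tensor. -/
def FullyProduct {n : ℕ} {d : Fin n → ℕ}
    (ψ : EuclideanSpace ℂ ((j : Fin n) → Fin (d j))) : Prop :=
  ∃ φ : (j : Fin n) → Fin (d j) → ℂ, ∀ i, ψ i = ∏ j, φ j (i j)

/-- `ψ` is biseparable across the bipartition `(T, Tᶜ)` of the `n` parties. -/
def Biseparable {n : ℕ} {d : Fin n → ℕ} (T : Set (Fin n))
    (ψ : EuclideanSpace ℂ ((j : Fin n) → Fin (d j))) : Prop :=
  ∃ (φ : ((j : T) → Fin (d j.val)) → ℂ) (χ : ((j : ↥Tᶜ) → Fin (d j.val)) → ℂ),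
    ∀ i, ψ i = φ (fun j => i j.val) * χ (fun j => i j.val)

/-- A nonzero vector is genuinely multipartite entangled if it is not biseparable
across any nontrivial bipartition. -/
def GME {n : ℕ} {d : Fin n → ℕ}
    (ψ : EuclideanSpace ℂ ((j : Fin n) → Fin (d j))) : Prop :=
  ψ ≠ 0 ∧ ∀ T : Set (Fin n), T ≠ ∅ → T ≠ Set.univ → ¬ Biseparable T ψ

namespace Thm8

open Finset Polynomial

variable {n : ℕ} {d : Fin n → ℕ}

/-- total weight of a box point -/
def wt (i : (j : Fin n) → Fin (d j)) : ℕ := ∑ j, (i j : ℕ)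

lemma wt_le (i : (j : Fin n) → Fin (d j)) : wt i ≤ ∑ j, (d j - 1) :=
  Finset.sum_le_sum (fun j _ => by have := (i j).isLt; omega)

/-- partial sums of caps -/
def pcs (c : Fin n → ℕ) (t : ℕ) : ℕ :=
  ∑ k ∈ Finset.range t, if h : k < n then c ⟨k, h⟩ else 0

lemma pcs_n (c : Fin n → ℕ) : pcs c n = ∑ j, c j := by
  rw [pcs, ← Fin.sum_univ_eq_sum_range (fun k => if h : k < n then c ⟨k, h⟩ else 0) n]
  exact Finset.sum_congr rfl (fun j _ => by simp [j.isLt])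

/-- greedy staircase representative of a given weight -/
def rep (c : Fin n → ℕ) (hc : ∀ j, c j < d j) (u : ℕ) : (j : Fin n) → Fin (d j) :=
  fun j => ⟨min (c j) (u - pcs c j.1), by have := hc j; omega⟩

lemma rep_le (c : Fin n → ℕ) (hc : ∀ j, c j < d j) (u : ℕ) (j : Fin n) :
    (rep c hc u j : ℕ) ≤ c j := min_le_left _ _

lemma wt_rep (c : Fin n → ℕ) (hc : ∀ j, c j < d j) (u : ℕ) (hu : u ≤ ∑ j, c j) :
    wt (rep c hc u) = u := by
  have key : ∀ t, (∑ k ∈ Finset.range t,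
      if h : k < n then min (c ⟨k, h⟩) (u - pcs c k) else 0) = min u (pcs c t) := by
    intro t
    induction t with
    | zero => simp [pcs]
    | succ t ih =>
      rw [Finset.sum_range_succ, ih]
      have hp : pcs c (t + 1) = pcs c t + (if h : t < n then c ⟨t, h⟩ else 0) := by
        rw [pcs, pcs, Finset.sum_range_succ]
      by_cases h : t < n
      · simp only [h, dif_pos] at hp ⊢; omega
      · simp only [h, dif_neg, not_false_iff] at hp ⊢; omega
  have : wt (rep c hc u) = ∑ k ∈ Finset.range n,
      if h : k < n then min (c ⟨k, h⟩) (u - pcs c k) else 0 := by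
    rw [wt, ← Fin.sum_univ_eq_sum_range (fun k => if h : k < n then min (c ⟨k, h⟩) (u - pcs c k) else 0) n]
    exact Finset.sum_congr rfl (fun j _ => by simp [j.isLt, rep])
  rw [this, key n, pcs_n]
  omega

lemma wt_eq_zero {i : (j : Fin n) → Fin (d j)} (h : wt i = 0) (hd : ∀ j, 2 ≤ d j) :
    i = fun j => (⟨0, by have := hd j; omega⟩ : Fin (d j)) := by
  rw [wt, Finset.sum_eq_zero_iff] at h
  funext j
  exact Fin.ext (h j (Finset.mem_univ j))

lemma wt_eq_top {i : (j : Fin n) → Fin (d j)} (hd : ∀ j, 2 ≤ d j)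
    (h : wt i = ∑ j, (d j - 1)) :
    i = fun j => (⟨d j - 1, by have := hd j; omega⟩ : Fin (d j)) := by
  have hle : ∀ j : Fin n, (i j : ℕ) ≤ d j - 1 := fun j => by have := (i j).isLt; omega
  have : ∀ j ∈ Finset.univ, (i j : ℕ) = d j - 1 := by
    by_contra hcon
    push_neg at hcon
    obtain ⟨j₀, -, hj₀⟩ := hcon
    have : wt i < ∑ j, (d j - 1) :=
      Finset.sum_lt_sum (fun j _ => hle j) ⟨j₀, Finset.mem_univ j₀, by have := hle j₀; omega⟩
    omega
  funext j
  exact Fin.ext (this j (Finset.mem_univ j))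

/-- The key non-biseparability lemma. -/
lemma not_bisep (hn : 2 ≤ n) (hd : ∀ j, 2 ≤ d j) (S : ℕ) (hS : S = ∑ j, (d j - 1))
    (f : (j : Fin n) → Fin (d j) → ℂ) (hf : ∀ j a, f j a ≠ 0)
    (a : ℕ → ℂ) (ha0 : a 0 = 0) (haS : ∀ w, S ≤ w → a w = 0)
    (ψ : EuclideanSpace ℂ ((j : Fin n) → Fin (d j)))
    (hψ : ∀ i, ψ i = a (wt i) * ∏ j, f j (i j))
    (hex : ∃ w, a w ≠ 0)
    (T : Set (Fin n)) (hT1 : T ≠ ∅) (hT2 : T ≠ Set.univ) :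
    ¬ Biseparable T ψ := by
  classical
  rintro ⟨φ, χ, hbs⟩
  -- caps for the two sides
  set cT : Fin n → ℕ := fun j => if j ∈ T then d j - 1 else 0 with hcTdef
  set cC : Fin n → ℕ := fun j => if j ∈ T then 0 else d j - 1 with hcCdef
  have hcT : ∀ j, cT j < d j := fun j => by have := hd j; simp only [hcTdef]; split <;> omega
  have hcC : ∀ j, cC j < d j := fun j => by have := hd j; simp only [hcCdef]; split <;> omega
  set ST : ℕ := ∑ j, cT j with hSTdef
  set SC : ℕ := ∑ j, cC j with hSCdef
  have hsum : ST + SC = S := by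
    rw [hSTdef, hSCdef, ← Finset.sum_add_distrib, hS]
    exact Finset.sum_congr rfl (fun j _ => by simp only [hcTdef, hcCdef]; split <;> omega)
  have hST1 : 1 ≤ ST := by
    obtain ⟨j₀, hj₀⟩ := Set.nonempty_iff_ne_empty.2 hT1
    have h1 : cT j₀ ≤ ST := Finset.single_le_sum (fun j _ => Nat.zero_le _) (Finset.mem_univ j₀)
    have : cT j₀ = d j₀ - 1 := by simp [hcTdef, hj₀]
    have := hd j₀; omega
  have hSC1 : 1 ≤ SC := by
    have : Tᶜ ≠ ∅ := by
      intro h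
      exact hT2 (by simpa [Set.compl_empty_iff] using h)
    obtain ⟨j₀, hj₀⟩ := Set.nonempty_iff_ne_empty.2 this
    have h1 : cC j₀ ≤ SC := Finset.single_le_sum (fun j _ => Nat.zero_le _) (Finset.mem_univ j₀)
    have hj₀' : j₀ ∉ T := hj₀
    have : cC j₀ = d j₀ - 1 := by simp [hcCdef, hj₀']
    have := hd j₀; omega
  -- minimal nonzero weight
  have hexS : ∃ w, a w ≠ 0 ∧ w ≤ S := by
    obtain ⟨w, hw⟩ := hex
    by_cases h : w ≤ S
    · exact ⟨w, hw, h⟩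
    · exact absurd (haS w (by omega)) hw
  set w₀ := Nat.find hexS with hw₀def
  have hw₀ne : a w₀ ≠ 0 := (Nat.find_spec hexS).1
  have hw₀le : w₀ ≤ S := (Nat.find_spec hexS).2
  have hw₀1 : 1 ≤ w₀ := by
    rcases Nat.eq_zero_or_pos w₀ with h | h
    · rw [h] at hw₀ne; exact absurd ha0 hw₀ne
    · exact h
  have hw₀S : w₀ ≤ S - 1 := by
    have : w₀ ≠ S := fun h => hw₀ne (haS w₀ (by omega))
    omega
  -- choice of the adjacent decompositions
  set u := max 1 (w₀ + 1 - SC) with hudef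
  set v := w₀ - u with hvdef
  have hu1 : 1 ≤ u := le_max_left _ _
  have huST : u ≤ ST := by omega
  have huw : u ≤ w₀ := by omega
  have huv : u + v = w₀ := by omega
  have hv1 : v + 1 ≤ SC := by omega
  -- representatives
  set x : ℕ → ((j : Fin n) → Fin (d j)) := fun α => rep cT hcT α with hxdef
  set y : ℕ → ((j : Fin n) → Fin (d j)) := fun β => rep cC hcC β with hydef
  set p : ℕ → ℕ → ((j : Fin n) → Fin (d j)) :=
    fun α β j => if j ∈ T then x α j else y β j with hpdef
  have hx0 : ∀ α j, j ∉ T → (x α j : ℕ) = 0 := by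
    intro α j hj
    have h1 : (x α j : ℕ) ≤ cT j := rep_le cT hcT α j
    have h2 : cT j = 0 := by simp only [hcTdef]; exact if_neg hj
    omega
  have hy0 : ∀ β j, j ∈ T → (y β j : ℕ) = 0 := by
    intro β j hj
    have h1 : (y β j : ℕ) ≤ cC j := rep_le cC hcC β j
    have h2 : cC j = 0 := by simp only [hcCdef]; exact if_pos hj
    omega
  have hwtp : ∀ α β, α ≤ ST → β ≤ SC → wt (p α β) = α + β := by
    intro α β hα hβ
    have h1 : wt (p α β) = ∑ j, ((if j ∈ T then (x α j : ℕ) else 0) +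
        (if j ∈ T then 0 else (y β j : ℕ))) := by
      rw [wt]
      refine Finset.sum_congr rfl (fun j _ => ?_)
      by_cases hj : j ∈ T <;> simp [hpdef, hj]
    rw [h1, Finset.sum_add_distrib]
    have h2 : ∑ j, (if j ∈ T then (x α j : ℕ) else 0) = wt (x α) := by
      rw [wt]
      refine Finset.sum_congr rfl (fun j _ => ?_)
      by_cases hj : j ∈ T
      · simp [hj]
      · simp [hj, hx0 α j hj]
    have h3 : ∑ j, (if j ∈ T then 0 else (y β j : ℕ)) = wt (y β) := by
      rw [wt]
      refine Finset.sum_congr rfl (fun j _ => ?_)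
      by_cases hj : j ∈ T
      · simp [hj, hy0 β j hj]
      · simp [hj]
    rw [h2, h3, hxdef, hydef, wt_rep cT hcT α (hSTdef ▸ hα), wt_rep cC hcC β (hSCdef ▸ hβ)]
  -- biseparability evaluated at mixed points
  set b : ℕ → ℂ := fun α => φ (fun j : ↥T => x α (j : Fin n)) with hbdef
  set c : ℕ → ℂ := fun β => χ (fun j : ↥(Tᶜ) => y β (j : Fin n)) with hcdef
  have key : ∀ α β, α ≤ ST → β ≤ SC →
      a (α + β) * ∏ j, f j (p α β j) = b α * c β := by
    intro α β hα hβ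
    have h1 := hbs (p α β)
    have h2 : (fun (j : ↥T) => p α β (j : Fin n)) = fun j : ↥T => x α (j : Fin n) := by
      funext j
      simp only [hpdef, if_pos j.property]
    have h3 : (fun (j : ↥(Tᶜ)) => p α β (j : Fin n)) = fun j : ↥(Tᶜ) => y β (j : Fin n) := by
      funext j
      have : j.val ∉ T := j.property
      simp only [hpdef, if_neg this]
    rw [hψ (p α β), hwtp α β hα hβ] at h1
    rw [h2, h3] at h1
    exact h1
  have hprod : ∀ i : ((j : Fin n) → Fin (d j)), (∏ j, f j (i j)) ≠ 0 :=
    fun i => Finset.prod_ne_zero_iff.2 (fun j _ => hf j (i j))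
  have k1 := key u v huST (by omega)
  rw [huv] at k1
  have hbu : b u ≠ 0 ∧ c v ≠ 0 := by
    have : b u * c v ≠ 0 := by
      rw [← k1]; exact mul_ne_zero hw₀ne (hprod _)
    exact ⟨left_ne_zero_of_mul this, right_ne_zero_of_mul this⟩
  have k2 := key (u - 1) (v + 1) (by omega) hv1
  have huv2 : (u - 1) + (v + 1) = w₀ := by omega
  rw [huv2] at k2
  have hbu1 : b (u - 1) ≠ 0 := by
    have : b (u - 1) * c (v + 1) ≠ 0 := by
      rw [← k2]; exact mul_ne_zero hw₀ne (hprod _)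
    exact left_ne_zero_of_mul this
  have k3 := key (u - 1) v (by omega) (by omega)
  have huv3 : (u - 1) + v = w₀ - 1 := by omega
  rw [huv3] at k3
  have haw1 : a (w₀ - 1) = 0 := by
    by_contra hne
    have := Nat.find_min hexS (show w₀ - 1 < w₀ by omega)
    push_neg at this
    exact absurd (this hne) (by omega)
  rw [haw1, zero_mul] at k3
  exact (mul_ne_zero hbu1 hbu.2) k3.symm


/-- product of linear factors along a geometric arc -/
noncomputable def arc (η z : ℂ) (m : ℕ) : Polynomial ℂ :=
  ∏ s ∈ Finset.range m, (X - C (z * η ^ s))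

lemma arc_monic (η z : ℂ) (m : ℕ) : (arc η z m).Monic :=
  monic_prod_of_monic _ _ (fun s _ => monic_X_sub_C _)

lemma arc_natDegree (η z : ℂ) (m : ℕ) : (arc η z m).natDegree = m := by
  rw [arc, natDegree_prod_of_monic _ _ (fun s _ => monic_X_sub_C _)]
  simp only [natDegree_X_sub_C]
  rw [Finset.sum_const, Finset.card_range, smul_eq_mul, mul_one]

lemma arc_coeff_zero_of_gt (η z : ℂ) {m k : ℕ} (h : m < k) : (arc η z m).coeff k = 0 :=
  coeff_eq_zero_of_natDegree_lt (by rw [arc_natDegree]; exact h)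

lemma arc_leading (η z : ℂ) (m : ℕ) : (arc η z m).coeff m = 1 := by
  have := (arc_monic η z m).coeff_natDegree
  rwa [arc_natDegree] at this

lemma arc_coeff_scale (η z : ℂ) (m : ℕ) : ∀ k, (arc η z m).coeff k
    = z ^ (m - k) * (arc η 1 m).coeff k := by
  induction m with
  | zero =>
    intro k
    cases k with
    | zero => simp [arc]
    | succ k => simp [arc]
  | succ m ih =>
    intro k
    have hQ : arc η z (m+1) = arc η z m * (X - C (z * η ^ m)) := by
      rw [arc, Finset.prod_range_succ, arc]
    have hQ1 : arc η 1 (m+1) = arc η 1 m * (X - C (1 * η ^ m)) := by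
      rw [arc, Finset.prod_range_succ, arc]
    rcases Nat.eq_zero_or_pos k with hk | hk
    · subst hk
      rw [hQ, hQ1, coeff_zero_eq_eval_zero, coeff_zero_eq_eval_zero]
      simp only [eval_mul, eval_sub, eval_X, eval_C, zero_sub, mul_neg, one_mul]
      rw [← coeff_zero_eq_eval_zero, ← coeff_zero_eq_eval_zero, ih 0]
      simp only [Nat.sub_zero]
      rw [pow_succ]
      ring
    · obtain ⟨k, rfl⟩ := Nat.exists_eq_succ_of_ne_zero (by omega : k ≠ 0)
      rw [hQ, hQ1, coeff_mul_X_sub_C, coeff_mul_X_sub_C, ih k, ih (k+1)]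
      rcases le_or_gt (k+1) m with h | h
      · have e1 : m - k = (m - (k+1)) + 1 := by omega
        have e2 : m + 1 - (k + 1) = m - k := by omega
        rw [e2, e1, pow_succ]
        ring
      · rcases lt_or_eq_of_le (by omega : m ≤ k) with h2 | h2
        · rw [arc_coeff_zero_of_gt η 1 h2, arc_coeff_zero_of_gt η 1 (by omega)]
          simp
        · subst h2
          rw [arc_coeff_zero_of_gt η 1 (show m < m + 1 by omega), arc_leading]
          simp

lemma arc_rec (η : ℂ) (m k : ℕ) :
    (arc η 1 m).coeff k * (η ^ (m - k) - 1)
      = (arc η 1 m).coeff (k + 1) * (η ^ (m - k - 1) - η ^ m) := by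
  -- identity: (∏_{s<m}(X - η^{s+1})) * (X - 1) = (∏_{s<m}(X - η^s)) * (X - η^m)
  have hident : arc η η m * (X - C 1) = arc η 1 m * (X - C (η ^ m)) := by
    have e : arc η η m = ∏ s ∈ Finset.range m, (X - C (η ^ (s + 1))) :=
      Finset.prod_congr rfl (fun s _ => by rw [pow_succ, mul_comm (η ^ s) η])
    have h1 : arc η η m * (X - C 1) = ∏ s ∈ Finset.range (m + 1), (X - C (η ^ s)) := by
      rw [e, Finset.prod_range_succ' (fun s => X - C (η ^ s)) m, pow_zero]
    have h2 : arc η 1 m * (X - C (η ^ m)) = ∏ s ∈ Finset.range (m + 1), (X - C (η ^ s)) := by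
      rw [Finset.prod_range_succ (fun s => X - C (η ^ s)) m, arc]
      congr 1
      exact Finset.prod_congr rfl (fun s _ => by rw [one_mul])
    rw [h1, h2]
  have hc := congrArg (fun p => Polynomial.coeff p (k + 1)) hident
  simp only [coeff_mul_X_sub_C] at hc
  rw [arc_coeff_scale η η m k, arc_coeff_scale η η m (k+1)] at hc
  have e1 : m - (k + 1) = m - k - 1 := by omega
  rw [e1] at hc
  linear_combination hc

lemma arc_coeff_ne (S : ℕ) (η : ℂ) (hη : IsPrimitiveRoot η S) (m : ℕ) (hm : m < S) :
    ∀ j k, k + j = m → (arc η 1 m).coeff k ≠ 0 := by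
  have hS0 : S ≠ 0 := by omega
  have hηne : η ≠ 0 := hη.ne_zero hS0
  intro j
  induction j with
  | zero =>
    intro k hk
    rw [(by omega : k = m), arc_leading]
    exact one_ne_zero
  | succ j ih =>
    intro k hk
    have hnext : (arc η 1 m).coeff (k + 1) ≠ 0 := ih (k + 1) (by omega)
    have hrec := arc_rec η m k
    have hA : η ^ (m - k) - 1 ≠ 0 := by
      intro h
      exact hη.pow_ne_one_of_pos_of_lt (by omega : m - k ≠ 0) (by omega : m - k < S)
        (by linear_combination h)
    have hB : η ^ (m - k - 1) - η ^ m ≠ 0 := by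
      have hfac : η ^ m = η ^ (m - k - 1) * η ^ (k + 1) := by
        rw [← pow_add]
        congr 1
        omega
      rw [hfac]
      intro h
      have h2 : η ^ (m - k - 1) * (1 - η ^ (k + 1)) = 0 := by ring_nf; linear_combination h
      rcases mul_eq_zero.1 h2 with h3 | h3
      · exact pow_ne_zero _ hηne h3
      · exact hη.pow_ne_one_of_pos_of_lt (by omega : k + 1 ≠ 0) (by omega : k + 1 < S)
          (by linear_combination -h3)
    intro h0
    rw [h0, zero_mul] at hrec
    exact (mul_ne_zero hnext hB) hrec.symm

lemma arc_top_coeff_zero (S : ℕ) (hS2 : 2 ≤ S) (η : ℂ) (hη : IsPrimitiveRoot η S) :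
    ∀ w, 1 ≤ w → w ≤ S - 1 → (arc η 1 S).coeff w = 0 := by
  have hS0 : S ≠ 0 := by omega
  have hpow : η ^ S = 1 := hη.pow_eq_one
  intro w
  induction w with
  | zero => omega
  | succ w ih =>
    intro h1 h2
    have hrec := arc_rec η S w
    have hleft : (arc η 1 S).coeff w * (η ^ (S - w) - 1) = 0 := by
      rcases Nat.eq_zero_or_pos w with hw0 | hw0
      · subst hw0
        rw [Nat.sub_zero, hpow]
        ring
      · rw [ih (by omega) (by omega), zero_mul]
    rw [hleft] at hrec
    have hB : η ^ (S - w - 1) - η ^ S ≠ 0 := by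
      rw [hpow]
      intro h
      exact hη.pow_ne_one_of_pos_of_lt (by omega : S - w - 1 ≠ 0) (by omega : S - w - 1 < S)
        (by linear_combination h)
    rcases mul_eq_zero.1 hrec.symm with h3 | h3
    · exact h3
    · exact absurd h3 hB

lemma prod_blocks (F : ℕ → Polynomial ℂ) (m' : Fin n → ℕ) :
    (∏ j, ∏ s ∈ Finset.range (m' j), F (pcs m' j.1 + s))
      = ∏ s ∈ Finset.range (pcs m' n), F s := by
  have key : ∀ t, (∏ k ∈ Finset.range t,
      if h : k < n then ∏ s ∈ Finset.range (m' ⟨k, h⟩), F (pcs m' k + s) else 1)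
      = ∏ s ∈ Finset.range (pcs m' t), F s := by
    intro t
    induction t with
    | zero => simp [pcs]
    | succ t ih =>
      rw [Finset.prod_range_succ, ih]
      have hp : pcs m' (t + 1) = pcs m' t + (if h : t < n then m' ⟨t, h⟩ else 0) := by
        rw [pcs, pcs, Finset.sum_range_succ]
      by_cases h : t < n
      · simp only [h, dif_pos] at hp ⊢
        rw [hp, Finset.prod_range_add]
      · simp only [h, dif_neg, not_false_iff] at hp ⊢
        rw [hp, add_zero, mul_one]
  rw [← key n]
  rw [← Fin.prod_univ_eq_prod_range
    (fun k => if h : k < n then ∏ s ∈ Finset.range (m' ⟨k, h⟩), F (pcs m' k + s) else 1) n]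
  exact Finset.prod_congr rfl (fun j _ => by simp [j.isLt])

lemma prod_box (q : (j : Fin n) → Fin (d j) → ℂ) :
    (∏ j, ∑ a : Fin (d j), C (q j a) * X ^ (a : ℕ))
      = ∑ i : ((j : Fin n) → Fin (d j)), C (∏ j, q j (i j)) * X ^ (wt i) := by
  classical
  rw [Finset.prod_univ_sum (fun j => (Finset.univ : Finset (Fin (d j))))
    (fun j a => C (q j a) * X ^ (a : ℕ))]
  rw [Fintype.piFinset_univ]
  refine Finset.sum_congr rfl (fun i _ => ?_)
  rw [Finset.prod_mul_distrib, ← map_prod C (fun j => q j (i j)) Finset.univ,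
    Finset.prod_pow_eq_pow_sum]
  rfl

lemma coeff_box (q : (j : Fin n) → Fin (d j) → ℂ) (w : ℕ) :
    (∏ j, ∑ a : Fin (d j), C (q j a) * X ^ (a : ℕ)).coeff w
      = ∑ i ∈ Finset.univ.filter (fun i : ((j : Fin n) → Fin (d j)) => wt i = w),
          ∏ j, q j (i j) := by
  classical
  rw [prod_box, Polynomial.finset_sum_coeff]
  rw [Finset.sum_filter]
  refine Finset.sum_congr rfl (fun i _ => ?_)
  rw [Polynomial.coeff_C_mul, Polynomial.coeff_X_pow]
  by_cases h : wt i = w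
  · simp [h]
  · simp [h, Ne.symm h]

/-- the basic linear parametrization of a (twisted) weight-sector subspace -/
noncomputable def gesMap (S : ℕ) (ν : ((j : Fin n) → Fin (d j)) → ℂ) :
    (Fin (S - 1) → ℂ) →ₗ[ℂ] EuclideanSpace ℂ ((j : Fin n) → Fin (d j)) where
  toFun a := WithLp.toLp 2 (fun i =>
    if h : 1 ≤ wt i ∧ wt i ≤ S - 1 then a ⟨wt i - 1, by omega⟩ * ν i else 0)
  map_add' a b := by
    ext i
    by_cases h : 1 ≤ wt i ∧ wt i ≤ S - 1 <;>
      simp [h, PiLp.add_apply, Pi.add_apply, add_mul]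
  map_smul' r a := by
    ext i
    by_cases h : 1 ≤ wt i ∧ wt i ≤ S - 1 <;>
      simp [h, PiLp.smul_apply, Pi.smul_apply, smul_eq_mul, mul_assoc]

lemma gesMap_apply (S : ℕ) (ν : ((j : Fin n) → Fin (d j)) → ℂ) (a : Fin (S-1) → ℂ)
    (i : (j : Fin n) → Fin (d j)) :
    gesMap S ν a i
      = if h : 1 ≤ wt i ∧ wt i ≤ S - 1 then a ⟨wt i - 1, by omega⟩ * ν i else 0 := rfl

lemma ges_mem (S : ℕ) (ν : ((j : Fin n) → Fin (d j)) → ℂ)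
    (ψ : EuclideanSpace ℂ ((j : Fin n) → Fin (d j)))
    (h : ψ ∈ LinearMap.range (gesMap S ν)) :
    ∃ a : ℕ → ℂ, a 0 = 0 ∧ (∀ w, S ≤ w → a w = 0) ∧ ∀ i, ψ i = a (wt i) * ν i := by
  obtain ⟨b, rfl⟩ := h
  refine ⟨fun w => if h : 1 ≤ w ∧ w ≤ S - 1 then b ⟨w - 1, by omega⟩ else 0, ?_, ?_, ?_⟩
  · beta_reduce
    rw [dif_neg (by omega)]
  · intro w hw
    beta_reduce
    rw [dif_neg (by omega)]
  · intro i
    rw [gesMap_apply]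
    beta_reduce
    by_cases h : 1 ≤ wt i ∧ wt i ≤ S - 1
    · rw [dif_pos h, dif_pos h]
    · rw [dif_neg h, dif_neg h, zero_mul]

lemma finrank_ges (hd : ∀ j, 2 ≤ d j) (S : ℕ) (hS : S = ∑ j, (d j - 1))
    (ν : ((j : Fin n) → Fin (d j)) → ℂ) (hν : ∀ i, ν i ≠ 0) :
    Module.finrank ℂ ↥(LinearMap.range (gesMap (d := d) S ν)) = S - 1 := by
  have hcfull : ∀ j, d j - 1 < d j := fun j => by have := hd j; omega
  have hinj : Function.Injective (gesMap (d := d) S ν) := by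
    rw [injective_iff_map_eq_zero]
    intro a ha
    funext w
    have hwS : (w : ℕ) + 1 ≤ S := by have := w.isLt; omega
    set i := rep (fun j => d j - 1) hcfull ((w : ℕ) + 1) with hidef
    have hwt : wt i = (w : ℕ) + 1 := wt_rep _ hcfull _ (by rw [← hS]; exact hwS)
    have : gesMap (d := d) S ν a i = 0 := by rw [ha]; rfl
    rw [gesMap_apply] at this
    have hcond : 1 ≤ wt i ∧ wt i ≤ S - 1 := by
      constructor <;> [omega; (rw [hwt]; have := w.isLt; omega)]
    rw [dif_pos hcond] at this
    have hz : a ⟨wt i - 1, by omega⟩ = 0 := by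
      have := mul_eq_zero.1 this
      rcases this with h | h
      · exact h
      · exact absurd h (hν i)
    have hidx : (⟨wt i - 1, by omega⟩ : Fin (S - 1)) = w := by
      apply Fin.ext
      simp [hwt]
    rw [hidx] at hz
    exact hz
  rw [LinearMap.finrank_range_of_inj hinj, Module.finrank_pi, Fintype.card_fin]

lemma ges_gme (hn : 2 ≤ n) (hd : ∀ j, 2 ≤ d j) (S : ℕ) (hS : S = ∑ j, (d j - 1))
    (f : (j : Fin n) → Fin (d j) → ℂ) (hf : ∀ j a, f j a ≠ 0) :
    ∀ ψ ∈ LinearMap.range (gesMap (d := d) S (fun i => ∏ j, f j (i j))),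
      ψ ≠ 0 → GME ψ := by
  intro ψ hmem hne
  obtain ⟨a, ha0, haS, hψ⟩ := ges_mem S _ ψ hmem
  have hex : ∃ w, a w ≠ 0 := by
    have : ∃ i, ψ i ≠ 0 := by
      by_contra h
      push_neg at h
      exact hne (by ext i; simpa using h i)
    obtain ⟨i, hi⟩ := this
    refine ⟨wt i, fun h => hi ?_⟩
    rw [hψ i, h, zero_mul]
  exact ⟨hne, fun T hT1 hT2 =>
    not_bisep hn hd S hS f hf a ha0 haS ψ hψ hex T hT1 hT2⟩

lemma ges_isOrtho (hd : ∀ j, 2 ≤ d j) (S : ℕ) (hS : S = ∑ j, (d j - 1))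
    (ν₁ ν₂ : ((j : Fin n) → Fin (d j)) → ℂ)
    (hcross : ∀ w, 1 ≤ w → w ≤ S - 1 →
      ∑ i ∈ Finset.univ.filter (fun i : ((j : Fin n) → Fin (d j)) => wt i = w),
        (starRingEnd ℂ) (ν₁ i) * ν₂ i = 0) :
    (LinearMap.range (gesMap (d := d) S ν₁)).IsOrtho
      (LinearMap.range (gesMap (d := d) S ν₂)) := by
  classical
  rw [Submodule.isOrtho_iff_inner_eq]
  intro u hu v hv
  obtain ⟨A, hA0, hAS, hAu⟩ := ges_mem S ν₁ u hu
  obtain ⟨B, hB0, hBS, hBv⟩ := ges_mem S ν₂ v hv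
  have hinner : (inner ℂ u v : ℂ) = ∑ i, (starRingEnd ℂ) (u i) * v i := by
    rw [PiLp.inner_apply]
    exact Finset.sum_congr rfl (fun i _ => by rw [RCLike.inner_apply'])
  rw [hinner]
  rw [← Finset.sum_fiberwise_of_maps_to (g := wt) (t := Finset.range (S + 1))
    (fun i _ => Finset.mem_range.2 (by have := wt_le i; omega))
    (fun i => (starRingEnd ℂ) (u i) * v i)]
  refine Finset.sum_eq_zero (fun w hw => ?_)
  have hsum : ∑ i ∈ Finset.univ.filter (fun i => wt i = w),
      (starRingEnd ℂ) (u i) * v i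
      = (starRingEnd ℂ) (A w) * B w *
        ∑ i ∈ Finset.univ.filter (fun i : ((j : Fin n) → Fin (d j)) => wt i = w),
          (starRingEnd ℂ) (ν₁ i) * ν₂ i := by
    rw [Finset.mul_sum]
    refine Finset.sum_congr rfl (fun i hi => ?_)
    have hwt : wt i = w := (Finset.mem_filter.1 hi).2
    rw [hAu i, hBv i, hwt, map_mul]
    ring
  rw [hsum]
  rcases Nat.eq_zero_or_pos w with h0 | h1
  · rw [h0, hA0]
    simp
  · rcases le_or_gt S w with hS' | hS'
    · rw [hAS w hS']
      simp
    · rw [hcross w h1 (by omega), mul_zero]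

lemma single_inner_ges (S : ℕ) (ν : ((j : Fin n) → Fin (d j)) → ℂ)
    (p : (j : Fin n) → Fin (d j)) (hp : ¬(1 ≤ wt p ∧ wt p ≤ S - 1)) :
    ∀ u ∈ LinearMap.range (gesMap (d := d) S ν),
      (inner ℂ u (EuclideanSpace.single p (1 : ℂ)) : ℂ) = 0 := by
  intro u hu
  rw [EuclideanSpace.inner_single_right]
  obtain ⟨b, rfl⟩ := hu
  rw [gesMap_apply, dif_neg hp]
  simp

lemma coeff_fin_sum {m : ℕ} (q : Fin m → ℂ) (a : Fin m) :
    (∑ a' : Fin m, C (q a') * X ^ (a' : ℕ)).coeff (a : ℕ) = q a := by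
  rw [Polynomial.finset_sum_coeff]
  rw [Finset.sum_eq_single a]
  · rw [coeff_C_mul, coeff_X_pow, if_pos rfl, mul_one]
  · intro b _ hb
    rw [coeff_C_mul, coeff_X_pow,
      if_neg (fun h => hb (Fin.ext ((by exact_mod_cast h.symm) : (b : ℕ) = (a : ℕ)))), mul_zero]
  · intro h
    exact absurd (Finset.mem_univ a) h

/-- the polynomial whose coefficients twist party `j` -/
noncomputable def gpoly (η : ℂ) (j : Fin n) : Polynomial ℂ :=
  arc η (η ^ pcs (fun j' : Fin n => d j' - 1) j.1) (d j - 1)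

noncomputable def f2 (η : ℂ) (j : Fin n) (a : Fin (d j)) : ℂ := (gpoly (d := d) η j).coeff a

lemma dj_lt_S (hn : 2 ≤ n) (hd : ∀ j, 2 ≤ d j) (j : Fin n) :
    d j - 1 < ∑ j', (d j' - 1) := by
  set j' : Fin n := if h : j.1 = 0 then ⟨1, by omega⟩ else ⟨0, by omega⟩ with hj'def
  have hne : j' ≠ j := by
    rw [hj'def]
    split
    · exact fun h => by simp [Fin.ext_iff] at h; omega
    · exact fun h => by simp [Fin.ext_iff] at h; omega
  have hpair : (d j - 1) + (d j' - 1) = ∑ k ∈ ({j, j'} : Finset (Fin n)), (d k - 1) := by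
    rw [Finset.sum_pair (Ne.symm hne)]
  have hsub : ∑ k ∈ ({j, j'} : Finset (Fin n)), (d k - 1) ≤ ∑ k, (d k - 1) :=
    Finset.sum_le_sum_of_subset (Finset.subset_univ _)
  have := hd j'
  omega

lemma f2_ne (hn : 2 ≤ n) (hd : ∀ j, 2 ≤ d j) (S : ℕ) (hS : S = ∑ j, (d j - 1))
    (η : ℂ) (hη : IsPrimitiveRoot η S) (j : Fin n) (a : Fin (d j)) :
    f2 (d := d) η j a ≠ 0 := by
  have hS0 : S ≠ 0 := by
    have := dj_lt_S hn hd j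
    omega
  have hmS : d j - 1 < S := by rw [hS]; exact dj_lt_S hn hd j
  rw [f2, gpoly, arc_coeff_scale]
  refine mul_ne_zero (pow_ne_zero _ (pow_ne_zero _ (hη.ne_zero hS0))) ?_
  refine arc_coeff_ne S η hη (d j - 1) hmS ((d j - 1) - (a : ℕ)) (a : ℕ) ?_
  have := a.isLt
  omega

lemma gprod (S : ℕ) (hS : S = ∑ j, (d j - 1)) (η : ℂ) :
    ∏ j, gpoly (d := d) η j = arc η 1 S := by
  have h1 : ∀ j : Fin n, gpoly (d := d) η j
      = ∏ s ∈ Finset.range (d j - 1),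
          (X - C (η ^ (pcs (fun j' : Fin n => d j' - 1) j.1 + s))) :=
    fun j => by
      rw [gpoly, arc]
      exact Finset.prod_congr rfl (fun s _ => by rw [pow_add])
  calc ∏ j, gpoly (d := d) η j
      = ∏ j : Fin n, ∏ s ∈ Finset.range (d j - 1),
          (X - C (η ^ (pcs (fun j' : Fin n => d j' - 1) j.1 + s))) :=
        Finset.prod_congr rfl (fun j _ => h1 j)
    _ = ∏ s ∈ Finset.range (pcs (fun j' : Fin n => d j' - 1) n), (X - C (η ^ s)) :=
        prod_blocks (fun t => X - C (η ^ t)) _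
    _ = arc η 1 S := by
        rw [pcs_n, ← hS, arc]
        exact Finset.prod_congr rfl (fun s _ => by rw [one_mul])

lemma gpoly_as_sum (hd : ∀ j, 2 ≤ d j) (η : ℂ) (j : Fin n) :
    gpoly (d := d) η j = ∑ a : Fin (d j), C (f2 (d := d) η j a) * X ^ (a : ℕ) := by
  have hdeg : (gpoly (d := d) η j).natDegree < d j := by
    rw [gpoly, arc_natDegree]
    have := hd j
    omega
  conv_lhs => rw [(gpoly (d := d) η j).as_sum_range' (d j) hdeg]
  rw [← Fin.sum_univ_eq_sum_range (fun k => Polynomial.monomial k ((gpoly (d := d) η j).coeff k)) (d j)]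
  exact Finset.sum_congr rfl (fun a _ => by rw [C_mul_X_pow_eq_monomial]; rfl)

lemma sector_sum_f2 (hn : 2 ≤ n) (hd : ∀ j, 2 ≤ d j) (S : ℕ) (hS : S = ∑ j, (d j - 1))
    (hS2 : 2 ≤ S) (η : ℂ) (hη : IsPrimitiveRoot η S) :
    ∀ w, 1 ≤ w → w ≤ S - 1 →
      ∑ i ∈ Finset.univ.filter (fun i : ((j : Fin n) → Fin (d j)) => wt i = w),
        ∏ j, f2 (d := d) η j (i j) = 0 := by
  intro w h1 h2
  rw [← coeff_box]
  have : (∏ j, ∑ a : Fin (d j), C (f2 (d := d) η j a) * X ^ (a : ℕ)) = arc η 1 S := by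
    rw [← gprod S hS η]
    exact Finset.prod_congr rfl (fun j _ => (gpoly_as_sum hd η j).symm)
  rw [this]
  exact arc_top_coeff_zero S hS2 η hη w h1 h2

lemma inner_ges_single (S : ℕ) (ν : ((j : Fin n) → Fin (d j)) → ℂ) (hνone : ∀ i, ν i = 1)
    (w : ℕ) (h1 : 1 ≤ w) (h2 : w ≤ S - 1)
    (ψ : EuclideanSpace ℂ ((j : Fin n) → Fin (d j))) :
    (inner ℂ (gesMap (d := d) S ν (Pi.single (⟨w - 1, by omega⟩ : Fin (S - 1)) 1)) ψ : ℂ)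
      = ∑ i ∈ Finset.univ.filter (fun i : ((j : Fin n) → Fin (d j)) => wt i = w), ψ i := by
  classical
  have hval : ∀ i, gesMap (d := d) S ν (Pi.single (⟨w - 1, by omega⟩ : Fin (S - 1)) 1) i
      = if wt i = w then 1 else 0 := by
    intro i
    rw [gesMap_apply]
    by_cases hwt : wt i = w
    · rw [dif_pos (by omega), if_pos hwt, Pi.single_apply,
        if_pos (Fin.ext (by simp [hwt])), hνone i, mul_one]
    · rw [if_neg hwt]
      by_cases hc : 1 ≤ wt i ∧ wt i ≤ S - 1
      · rw [dif_pos hc, Pi.single_apply, if_neg (fun h => hwt (by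
          have h2 := congrArg Fin.val h
          simp only at h2
          omega)), zero_mul]
      · rw [dif_neg hc]
  rw [PiLp.inner_apply, Finset.sum_filter]
  refine Finset.sum_congr rfl (fun i _ => ?_)
  rw [RCLike.inner_apply, hval i]
  split <;> simp

end Thm8

open Thm8 Polynomial in
/-- Theorem 8: the multipartite Hilbert space decomposes as
`span{|0…0⟩, |d₁−1 … dₙ−1⟩} ⊕ GES_{S−1} ⊕ GES_{S−1} ⊕ CES_{D−2S}`, i.e. there are
two mutually orthogonal GESs of dimension `S − 1`, orthogonal to the two basis
vectors, whose joint orthocomplement (together with those basis vectors) is a CES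
of dimension `D − 2S`. -/
theorem multipartite_two_GES_decomposition (n : ℕ) (hn : 2 ≤ n) (d : Fin n → ℕ)
    (hd : ∀ j, 2 ≤ d j) (S D : ℕ) (hS : S = ∑ j, (d j - 1)) (hD : D = ∏ j, d j)
    (A : Submodule ℂ (EuclideanSpace ℂ ((j : Fin n) → Fin (d j))))
    (hA : A = Submodule.span ℂ
        {EuclideanSpace.single (fun j => (⟨0, by have := hd j; omega⟩ : Fin (d j))) (1 : ℂ),
         EuclideanSpace.single (fun j => (⟨d j - 1, by have := hd j; omega⟩ : Fin (d j))) (1 : ℂ)}) :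
    ∃ G₁ G₂ : Submodule ℂ (EuclideanSpace ℂ ((j : Fin n) → Fin (d j))),
      Submodule.IsOrtho G₁ G₂ ∧ Submodule.IsOrtho A G₁ ∧ Submodule.IsOrtho A G₂ ∧
      Module.finrank ℂ ↥G₁ = S - 1 ∧ Module.finrank ℂ ↥G₂ = S - 1 ∧
      (∀ ψ ∈ G₁, ψ ≠ 0 → GME ψ) ∧ (∀ ψ ∈ G₂, ψ ≠ 0 → GME ψ) ∧
      Module.finrank ℂ ↥((A ⊔ G₁ ⊔ G₂)ᗮ) = D - 2 * S ∧
      (∀ ψ ∈ (A ⊔ G₁ ⊔ G₂)ᗮ, FullyProduct ψ → ψ = 0) := by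
  classical
  have hS2 : 2 ≤ S := by
    have h1 : (n : ℕ) = ∑ _j : Fin n, 1 := by simp
    have h2 : ∑ _j : Fin n, 1 ≤ ∑ j, (d j - 1) :=
      Finset.sum_le_sum (fun j _ => by have := hd j; omega)
    omega
  have hS0 : S ≠ 0 := by omega
  -- the primitive root and the two twists
  set η : ℂ := Complex.exp (2 * Real.pi * Complex.I / S) with hηdef
  have hη : IsPrimitiveRoot η S := Complex.isPrimitiveRoot_exp S hS0
  set f₁ : (j : Fin n) → Fin (d j) → ℂ := fun _ _ => 1 with hf₁def
  set fb : (j : Fin n) → Fin (d j) → ℂ := f2 (d := d) η with hfbdef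
  set ν₁ : ((j : Fin n) → Fin (d j)) → ℂ := fun i => ∏ j, f₁ j (i j) with hν₁def
  set ν₂ : ((j : Fin n) → Fin (d j)) → ℂ := fun i => ∏ j, fb j (i j) with hν₂def
  have hν₁one : ∀ i, ν₁ i = 1 := fun i => by
    rw [hν₁def]; exact Finset.prod_const_one
  have hν₁ne : ∀ i, ν₁ i ≠ 0 := fun i => by rw [hν₁one i]; exact one_ne_zero
  have hfbne : ∀ j a, fb j a ≠ 0 := fun j a => f2_ne hn hd S hS η hη j a
  have hν₂ne : ∀ i, ν₂ i ≠ 0 := fun i =>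
    Finset.prod_ne_zero_iff.2 (fun j _ => hfbne j (i j))
  set G₁ := LinearMap.range (gesMap (d := d) S ν₁) with hG₁def
  set G₂ := LinearMap.range (gesMap (d := d) S ν₂) with hG₂def
  -- the two distinguished points
  set p0 : (j : Fin n) → Fin (d j) := fun j => (⟨0, by have := hd j; omega⟩ : Fin (d j))
    with hp0def
  set pM : (j : Fin n) → Fin (d j) := fun j => (⟨d j - 1, by have := hd j; omega⟩ : Fin (d j))
    with hpMdef
  set u0 := EuclideanSpace.single p0 (1 : ℂ) with hu0def
  set uM := EuclideanSpace.single pM (1 : ℂ) with huMdef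
  have hwt0 : wt p0 = 0 := by
    rw [hp0def, wt]
    simp
  have hwtM : wt pM = S := by
    rw [hpMdef, wt, hS]
  -- orthogonality of the two sector spaces
  have hG₁G₂ : G₁.IsOrtho G₂ := by
    refine ges_isOrtho hd S hS ν₁ ν₂ (fun w h1 h2 => ?_)
    have hs := sector_sum_f2 hn hd S hS hS2 η hη w h1 h2
    calc ∑ i ∈ Finset.univ.filter (fun i : ((j : Fin n) → Fin (d j)) => wt i = w),
          (starRingEnd ℂ) (ν₁ i) * ν₂ i
        = ∑ i ∈ Finset.univ.filter (fun i : ((j : Fin n) → Fin (d j)) => wt i = w),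
            ∏ j, fb j (i j) := by
          refine Finset.sum_congr rfl (fun i _ => ?_)
          rw [hν₁one i, map_one, one_mul, hν₂def]
      _ = 0 := hs
  have hAG : ∀ (ν : ((j : Fin n) → Fin (d j)) → ℂ),
      A.IsOrtho (LinearMap.range (gesMap (d := d) S ν)) := by
    intro ν
    rw [hA]
    show Submodule.span ℂ {u0, uM} ≤ (LinearMap.range (gesMap (d := d) S ν))ᗮ
    rw [Submodule.span_le]
    rintro x hx
    rcases Set.mem_insert_iff.1 hx with rfl | hx
    · refine (Submodule.mem_orthogonal _ _).2 (fun u hu => ?_)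
      exact single_inner_ges S ν p0 (by rw [hwt0]; omega) u hu
    · rcases Set.mem_singleton_iff.1 hx with rfl
      refine (Submodule.mem_orthogonal _ _).2 (fun u hu => ?_)
      exact single_inner_ges S ν pM (by rw [hwtM]; omega) u hu
  have hAG₁ : A.IsOrtho G₁ := hAG ν₁
  have hAG₂ : A.IsOrtho G₂ := hAG ν₂
  -- dimensions
  have hfr₁ : Module.finrank ℂ ↥G₁ = S - 1 := finrank_ges hd S hS ν₁ hν₁ne
  have hfr₂ : Module.finrank ℂ ↥G₂ = S - 1 := finrank_ges hd S hS ν₂ hν₂ne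
  have hp0M : p0 ≠ pM := by
    intro h
    have := congrFun h ⟨0, by omega⟩
    rw [hp0def, hpMdef] at this
    have h2 := congrArg Fin.val this
    simp only at h2
    have := hd ⟨0, by omega⟩
    omega
  have hu0ne : u0 ≠ 0 := by
    intro h
    have : u0 p0 = 0 := by rw [h]; rfl
    rw [hu0def, EuclideanSpace.single_apply, if_pos rfl] at this
    simpa using this
  have huMne : uM ≠ 0 := by
    intro h
    have : uM pM = 0 := by rw [h]; rfl
    rw [huMdef, EuclideanSpace.single_apply, if_pos rfl] at this
    simpa using this
  have hA2 : Module.finrank ℂ ↥A = 2 := by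
    have hspan : A = (ℂ ∙ u0) ⊔ (ℂ ∙ uM) := by
      rw [hA, ← Submodule.span_insert]
    have hOrtho : (ℂ ∙ u0).IsOrtho (ℂ ∙ uM) := by
      rw [Submodule.isOrtho_span]
      rintro x rfl y rfl
      rw [hu0def, EuclideanSpace.inner_single_left, huMdef, EuclideanSpace.single_apply,
        if_neg hp0M]
      simp
    have hkey := Submodule.finrank_sup_add_finrank_inf_eq (ℂ ∙ u0) (ℂ ∙ uM)
    rw [disjoint_iff.1 hOrtho.disjoint, finrank_bot,
      finrank_span_singleton hu0ne, finrank_span_singleton huMne] at hkey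
    rw [hspan]
    omega
  -- finrank of the big sup and its complement
  have hAsupG₁ : Module.finrank ℂ ↥(A ⊔ G₁) = 2 + (S - 1) := by
    have hkey := Submodule.finrank_sup_add_finrank_inf_eq A G₁
    rw [disjoint_iff.1 hAG₁.disjoint, finrank_bot, hA2, hfr₁] at hkey
    omega
  have hsupOrtho : (A ⊔ G₁).IsOrtho G₂ := Submodule.isOrtho_sup_left.2 ⟨hAG₂, hG₁G₂⟩
  have hW : Module.finrank ℂ ↥(A ⊔ G₁ ⊔ G₂) = 2 * S := by
    have hkey := Submodule.finrank_sup_add_finrank_inf_eq (A ⊔ G₁) G₂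
    rw [disjoint_iff.1 hsupOrtho.disjoint, finrank_bot, hAsupG₁, hfr₂] at hkey
    omega
  have hEdim : Module.finrank ℂ (EuclideanSpace ℂ ((j : Fin n) → Fin (d j))) = D := by
    rw [finrank_euclideanSpace, Fintype.card_pi, hD]
    exact Finset.prod_congr rfl (fun j _ => Fintype.card_fin (d j))
  have htot := Submodule.finrank_add_finrank_orthogonal (K := A ⊔ G₁ ⊔ G₂)
  rw [hW, hEdim] at htot
  have hWperp : Module.finrank ℂ ↥((A ⊔ G₁ ⊔ G₂)ᗮ) = D - 2 * S := by omega
  -- the CES property of the complement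
  have hCES : ∀ ψ ∈ (A ⊔ G₁ ⊔ G₂)ᗮ, FullyProduct ψ → ψ = 0 := by
    intro ψ hψW hFP
    obtain ⟨φ, hφ⟩ := hFP
    have hmem : ∀ u ∈ A ⊔ G₁ ⊔ G₂, (inner ℂ u ψ : ℂ) = 0 :=
      (Submodule.mem_orthogonal _ ψ).1 hψW
    have hψp0 : ψ p0 = 0 := by
      have hu0W : u0 ∈ A ⊔ G₁ ⊔ G₂ :=
        Submodule.mem_sup_left (Submodule.mem_sup_left
          (hA ▸ Submodule.subset_span (Set.mem_insert _ _)))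
      have := hmem u0 hu0W
      rw [hu0def, EuclideanSpace.inner_single_left] at this
      simpa using this
    have hψpM : ψ pM = 0 := by
      have huMW : uM ∈ A ⊔ G₁ ⊔ G₂ :=
        Submodule.mem_sup_left (Submodule.mem_sup_left
          (hA ▸ Submodule.subset_span (Set.mem_insert_of_mem _ rfl)))
      have := hmem uM huMW
      rw [huMdef, EuclideanSpace.inner_single_left] at this
      simpa using this
    have hsec : ∀ w, 1 ≤ w → w ≤ S - 1 →
        ∑ i ∈ Finset.univ.filter (fun i : ((j : Fin n) → Fin (d j)) => wt i = w),
          ψ i = 0 := by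
      intro w h1 h2
      have hgW : gesMap (d := d) S ν₁ (Pi.single (⟨w - 1, by omega⟩ : Fin (S - 1)) 1)
          ∈ A ⊔ G₁ ⊔ G₂ :=
        Submodule.mem_sup_left (Submodule.mem_sup_right (LinearMap.mem_range_self _ _))
      have hin := hmem _ hgW
      rwa [inner_ges_single S ν₁ hν₁one w h1 h2 ψ] at hin
    -- the polynomial vanishes
    have hP0 : (∏ j, ∑ a : Fin (d j), C (φ j a) * X ^ (a : ℕ)) = 0 := by
      apply Polynomial.ext
      intro w
      rw [Polynomial.coeff_zero, coeff_box]
      by_cases h1 : 1 ≤ w ∧ w ≤ S - 1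
      · rw [show (∑ i ∈ Finset.univ.filter
            (fun i : ((j : Fin n) → Fin (d j)) => wt i = w), ∏ j, φ j (i j))
            = ∑ i ∈ Finset.univ.filter
              (fun i : ((j : Fin n) → Fin (d j)) => wt i = w), ψ i from
          Finset.sum_congr rfl (fun i _ => (hφ i).symm)]
        exact hsec w h1.1 h1.2
      · refine Finset.sum_eq_zero (fun i hi => ?_)
        have hwt : wt i = w := (Finset.mem_filter.1 hi).2
        rw [← hφ i]
        have hle : wt i ≤ S := by rw [hS]; exact wt_le i
        rcases Nat.eq_zero_or_pos w with h0 | hpos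
        · rw [wt_eq_zero (by omega : wt i = 0) hd]
          exact hψp0
        · have hwS : wt i = ∑ j, (d j - 1) := by rw [← hS]; omega
          rw [wt_eq_top hd hwS]
          exact hψpM
    obtain ⟨j0, -, hj0⟩ := Finset.prod_eq_zero_iff.1 hP0
    have hφ0 : ∀ a, φ j0 a = 0 := by
      intro a
      have h := coeff_fin_sum (fun a' => φ j0 a') a
      rw [hj0, Polynomial.coeff_zero] at h
      exact h.symm
    have hz : ∀ i, ψ i = 0 := fun i => by
      rw [hφ i]
      exact Finset.prod_eq_zero (Finset.mem_univ j0) (hφ0 (i j0))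
    ext i
    exact hz i
  exact ⟨G₁, G₂, hG₁G₂, hAG₁, hAG₂, hfr₁, hfr₂,
    ges_gme hn hd S hS f₁ (fun j a => one_ne_zero),
    ges_gme hn hd S hS fb hfbne, hWperp, hCES⟩
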